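/- arXiv:1205.1960 — 6 statements merged into one kernel-verified Lean document; each statement's English description precedes it below -/
import Mathlib

section
/- Let A be an n×n row-stochastic matrix with nonnegative entries, let 0 < c < 1, let f be a vector with nonnegative coordinates satisfying Aᵀf = f and ‖f‖₁ = 1, and let v be a vector with nonnegative coordinates satisfying ‖v‖₁ = 1. If π satisfies (cAᵀ + (1-c)v𝟏ᵀ)π = π with ‖π‖₁ = 1 and nonnegative coordinates, then ((1-c)/(1+c))·‖v - f‖₁ ≤ ‖π - f‖₁ ≤ ‖v - f‖₁. -/
open Finset Matrix

/-- For a row-stochastic matrix `A`, damping constant `0 < c < 1`, stationary vector `f`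
(`Aᵀf = f`, nonnegative, `‖f‖₁ = 1`), personalization vector `v` (nonnegative, `‖v‖₁ = 1`),
and PageRank vector `π` (nonnegative, `‖π‖₁ = 1`, fixed by `cAᵀ + (1-c)v𝟏ᵀ`), we have
`((1-c)/(1+c))‖v - f‖₁ ≤ ‖π - f‖₁ ≤ ‖v - f‖₁`. -/
theorem pagerank_degree_distance_bounds {n : ℕ}
    (A : Matrix (Fin n) (Fin n) ℝ)
    (hA_nonneg : ∀ i j, 0 ≤ A i j) (hA_row : ∀ i, ∑ j, A i j = 1)
    (c : ℝ) (hc0 : 0 < c) (hc1 : c < 1)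
    (f : Fin n → ℝ) (hf_nonneg : ∀ i, 0 ≤ f i)
    (hf_fix : Aᵀ *ᵥ f = f) (hf_norm : ∑ i, |f i| = 1)
    (v : Fin n → ℝ) (hv_nonneg : ∀ i, 0 ≤ v i) (hv_norm : ∑ i, |v i| = 1)
    (π : Fin n → ℝ) (hπ_nonneg : ∀ i, 0 ≤ π i) (hπ_norm : ∑ i, |π i| = 1)
    (hπ_fix : (c • Aᵀ + (1 - c) • Matrix.vecMulVec v 1) *ᵥ π = π) :
    ((1 - c) / (1 + c)) * (∑ i, |v i - f i|) ≤ ∑ i, |π i - f i| ∧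
      ∑ i, |π i - f i| ≤ ∑ i, |v i - f i| := by
  have hπ_sum : ∑ i, π i = 1 := by
    rw [← hπ_norm]
    exact Finset.sum_congr rfl fun i _ => (abs_of_nonneg (hπ_nonneg i)).symm
  -- key pointwise identity : π - f = c Aᵀ(π-f) + (1-c)(v-f)
  have key : ∀ j, π j - f j
      = c * (∑ i, A i j * (π i - f i)) + (1 - c) * (v j - f j) := by
    intro j
    have h1 := congrFun hπ_fix j
    have h2 := congrFun hf_fix j
    simp only [Matrix.mulVec, dotProduct, Matrix.add_apply, Matrix.smul_apply,
      Matrix.transpose_apply, Matrix.vecMulVec_apply, Pi.one_apply, smul_eq_mul] at h1 h2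
    have hsplit : ∑ i, (c * A i j + (1 - c) * (v j * 1)) * π i
        = c * (∑ i, A i j * π i) + (1 - c) * v j * (∑ i, π i) := by
      rw [Finset.mul_sum, Finset.mul_sum, ← Finset.sum_add_distrib]
      exact Finset.sum_congr rfl fun i _ => by ring
    rw [hsplit, hπ_sum] at h1
    have hsub : ∑ i, A i j * (π i - f i)
        = (∑ i, A i j * π i) - (∑ i, A i j * f i) := by
      rw [← Finset.sum_sub_distrib]
      exact Finset.sum_congr rfl fun i _ => by ring
    rw [hsub, h2]
    linarith
  -- contraction of Aᵀ in ℓ¹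
  have contract : ∀ x : Fin n → ℝ,
      ∑ j, |∑ i, A i j * x i| ≤ ∑ i, |x i| := by
    intro x
    calc ∑ j, |∑ i, A i j * x i| ≤ ∑ j, ∑ i, |A i j * x i| :=
          Finset.sum_le_sum fun j _ => Finset.abs_sum_le_sum_abs _ _
      _ = ∑ i, ∑ j, A i j * |x i| := by
          rw [Finset.sum_comm]
          exact Finset.sum_congr rfl fun i _ => Finset.sum_congr rfl fun j _ => by
            rw [abs_mul, abs_of_nonneg (hA_nonneg i j)]
      _ = ∑ i, |x i| := Finset.sum_congr rfl fun i _ => by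
          rw [← Finset.sum_mul, hA_row i, one_mul]
  set D := ∑ i, |π i - f i| with hD
  set E := ∑ i, |v i - f i| with hE
  have hS := contract (fun i => π i - f i)
  -- upper bound : D ≤ c * D + (1-c) * E
  have hupper : D ≤ c * D + (1 - c) * E := by
    calc D = ∑ j, |c * (∑ i, A i j * (π i - f i)) + (1 - c) * (v j - f j)| :=
          Finset.sum_congr rfl fun j _ => by rw [key j]
      _ ≤ ∑ j, (c * |∑ i, A i j * (π i - f i)| + (1 - c) * |v j - f j|) := by
          refine Finset.sum_le_sum fun j _ => ?_
          calc |c * (∑ i, A i j * (π i - f i)) + (1 - c) * (v j - f j)|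
              ≤ |c * (∑ i, A i j * (π i - f i))| + |(1 - c) * (v j - f j)| :=
                abs_add_le _ _
            _ = c * |∑ i, A i j * (π i - f i)| + (1 - c) * |v j - f j| := by
                rw [abs_mul, abs_mul, abs_of_nonneg hc0.le,
                  abs_of_nonneg (by linarith : (0:ℝ) ≤ 1 - c)]
      _ = c * (∑ j, |∑ i, A i j * (π i - f i)|) + (1 - c) * E := by
          rw [Finset.sum_add_distrib, Finset.mul_sum, Finset.mul_sum]
      _ ≤ c * D + (1 - c) * E := by
          have := mul_le_mul_of_nonneg_left hS hc0.le
          linarith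
  -- lower bound : (1-c) * E ≤ (1+c) * D
  have hlower : (1 - c) * E ≤ (1 + c) * D := by
    have hEeq : (1 - c) * E = ∑ j, |(π j - f j) - c * (∑ i, A i j * (π i - f i))| := by
      rw [hE, Finset.mul_sum]
      refine Finset.sum_congr rfl fun j _ => ?_
      rw [← abs_of_nonneg (by linarith : (0:ℝ) ≤ 1 - c), ← abs_mul]
      congr 1
      linarith [key j]
    rw [hEeq]
    calc ∑ j, |(π j - f j) - c * (∑ i, A i j * (π i - f i))|
        ≤ ∑ j, (|π j - f j| + c * |∑ i, A i j * (π i - f i)|) := by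
          refine Finset.sum_le_sum fun j _ => ?_
          calc |(π j - f j) - c * (∑ i, A i j * (π i - f i))|
              ≤ |π j - f j| + |c * (∑ i, A i j * (π i - f i))| := abs_sub _ _
            _ = |π j - f j| + c * |∑ i, A i j * (π i - f i)| := by
                rw [abs_mul, abs_of_nonneg hc0.le]
      _ = D + c * (∑ j, |∑ i, A i j * (π i - f i)|) := by
          rw [Finset.sum_add_distrib, Finset.mul_sum]
      _ ≤ D + c * D := by
          have := mul_le_mul_of_nonneg_left hS hc0.le
          linarith
      _ = (1 + c) * D := by ring
  constructor
  · rw [div_mul_eq_mul_div, div_le_iff₀ (by linarith : (0:ℝ) < 1 + c)]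
    nlinarith [hlower]
  · nlinarith [hupper]
end

section
/- Let A be an n×n row-stochastic matrix, let 0 < c < 1, and let v be a vector with nonnegative coordinates satisfying 𝟏ᵀv = 1. If π is a vector with ‖π‖₁ = 1 and nonnegative coordinates satisfying (cAᵀ + (1-c)v𝟏ᵀ)π = π, then π = (1-c)(I - cAᵀ)⁻¹v. -/
open Finset Matrix

/-- The PageRank vector `π` satisfies `π = (1-c)(I - cAᵀ)⁻¹ v`. -/
theorem pagerank_eq_resolvent_formula {n : ℕ}
    (A : Matrix (Fin n) (Fin n) ℝ)
    (hA_nonneg : ∀ i j, 0 ≤ A i j) (hA_row : ∀ i, ∑ j, A i j = 1)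
    (c : ℝ) (hc0 : 0 < c) (hc1 : c < 1)
    (v : Fin n → ℝ) (hv_nonneg : ∀ i, 0 ≤ v i) (hv_sum : ∑ i, v i = 1)
    (π : Fin n → ℝ) (hπ_nonneg : ∀ i, 0 ≤ π i) (hπ_norm : ∑ i, |π i| = 1)
    (hπ_fix : (c • Aᵀ + (1 - c) • Matrix.vecMulVec v 1) *ᵥ π = π) :
    π = (1 - c) • (((1 : Matrix (Fin n) (Fin n) ℝ) - c • Aᵀ)⁻¹ *ᵥ v) := by
  set M : Matrix (Fin n) (Fin n) ℝ := (1 : Matrix (Fin n) (Fin n) ℝ) - c • Aᵀ with hMdef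
  have hπ_sum : ∑ i, π i = 1 := by
    rw [← hπ_norm]; exact Finset.sum_congr rfl fun i _ => (abs_of_nonneg (hπ_nonneg i)).symm
  -- vecMulVec v 1 *ᵥ π = v
  have hvv : Matrix.vecMulVec v 1 *ᵥ π = v := by
    funext i
    simp only [Matrix.mulVec, Matrix.vecMulVec_apply, dotProduct, Pi.one_apply, mul_one]
    rw [← Finset.mul_sum, hπ_sum, mul_one]
  -- key linear equation
  have hkey : M *ᵥ π = (1 - c) • v := by
    have := hπ_fix
    rw [Matrix.add_mulVec, Matrix.smul_mulVec, Matrix.smul_mulVec, hvv] at this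
    rw [hMdef, Matrix.sub_mulVec, Matrix.one_mulVec, Matrix.smul_mulVec]
    exact sub_eq_of_eq_add' this.symm
  -- injectivity of M.mulVec
  have hinj : Function.Injective M.mulVec := by
    intro x y hxy
    have hd : M *ᵥ (x - y) = 0 := by
      rw [Matrix.mulVec_sub, hxy, sub_self]
    set d := x - y with hddef
    have hdc : ∀ i, d i = c * ∑ j, A j i * d j := by
      intro i
      have h0 := congrFun hd i
      simp only [hMdef, Matrix.sub_mulVec, Matrix.one_mulVec, Matrix.smul_mulVec,
        Pi.sub_apply, Pi.smul_apply, Pi.zero_apply, smul_eq_mul] at h0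
      have : d i - c * (Aᵀ *ᵥ d) i = 0 := h0
      have h1 : (Aᵀ *ᵥ d) i = ∑ j, A j i * d j := by
        simp [Matrix.mulVec, dotProduct, Matrix.transpose_apply]
      linarith [this, h1 ▸ this]
    have hbound : ∑ i, |d i| ≤ c * ∑ i, |d i| := by
      calc ∑ i, |d i| ≤ ∑ i, c * ∑ j, A j i * |d j| := by
            apply Finset.sum_le_sum
            intro i _
            rw [hdc i, abs_mul, abs_of_pos hc0]
            apply mul_le_mul_of_nonneg_left _ hc0.le
            calc |∑ j, A j i * d j| ≤ ∑ j, |A j i * d j| := Finset.abs_sum_le_sum_abs _ _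
              _ = ∑ j, A j i * |d j| := by
                  exact Finset.sum_congr rfl fun j _ => by
                    rw [abs_mul, abs_of_nonneg (hA_nonneg j i)]
        _ = c * ∑ j, (∑ i, A j i) * |d j| := by
            rw [← Finset.mul_sum, Finset.sum_comm]
            congr 1
            exact Finset.sum_congr rfl fun j _ => (Finset.sum_mul _ _ _).symm
        _ = c * ∑ j, |d j| := by
            congr 1
            exact Finset.sum_congr rfl fun j _ => by rw [hA_row j, one_mul]
    have hsum0 : ∑ i, |d i| = 0 := by
      by_contra h
      have hpos : 0 < ∑ i, |d i| := lt_of_le_of_ne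
        (Finset.sum_nonneg fun i _ => abs_nonneg _) (Ne.symm h)
      nlinarith
    have hd0 : d = 0 := by
      funext i
      have := (Finset.sum_eq_zero_iff_of_nonneg (fun i _ => abs_nonneg (d i))).mp hsum0 i
        (Finset.mem_univ i)
      exact abs_eq_zero.mp this
    exact sub_eq_zero.mp hd0
  have hu : IsUnit M := Matrix.mulVec_injective_iff_isUnit.mp hinj
  have hdet : IsUnit M.det := (Matrix.isUnit_iff_isUnit_det M).mp hu
  calc π = (M⁻¹ * M) *ᵥ π := by rw [Matrix.nonsing_inv_mul M hdet, Matrix.one_mulVec]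
    _ = M⁻¹ *ᵥ (M *ᵥ π) := by rw [Matrix.mulVec_mulVec]
    _ = (1 - c) • (M⁻¹ *ᵥ v) := by rw [hkey, Matrix.mulVec_smul]
end

section
/- Let A be an n×n row-stochastic matrix, let 0 < c < 1, let f satisfy Aᵀf = f with ‖f‖₁ = 1 and nonnegative coordinates, and let v be a vector with nonnegative coordinates and 𝟏ᵀv = 1. If π is the PageRank vector, i.e., π has nonnegative coordinates, ‖π‖₁ = 1 and (cAᵀ + (1-c)v𝟏ᵀ)π = π, then π - f = (1-c)(I - cAᵀ)⁻¹(v - f). -/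
open Finset Matrix

lemma det_ne_of_stoch {n : ℕ} (A : Matrix (Fin n) (Fin n) ℝ)
    (hA_nonneg : ∀ i j, 0 ≤ A i j) (hA_row : ∀ i, ∑ j, A i j = 1)
    (c : ℝ) (hc0 : 0 < c) (hc1 : c < 1) :
    ((1 : Matrix (Fin n) (Fin n) ℝ) - c • Aᵀ).det ≠ 0 := by
  intro hdet
  obtain ⟨x, hx, hMx⟩ := (Matrix.exists_mulVec_eq_zero_iff).2 hdet
  have hfix : ∀ i, x i = c * ∑ j, A j i * x j := by
    intro i
    have h := hMx
    rw [Matrix.sub_mulVec, Matrix.smul_mulVec, Matrix.one_mulVec, sub_eq_zero] at h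
    rw [congrFun h i]
    simp [Matrix.mulVec, dotProduct, Matrix.transpose_apply]
  have hS : ∑ i, |x i| ≤ c * ∑ i, |x i| := by
    calc ∑ i, |x i| = ∑ i, |c * ∑ j, A j i * x j| := by
          exact Finset.sum_congr rfl fun i _ => by rw [hfix i]
      _ ≤ ∑ i, c * ∑ j, A j i * |x j| := by
          apply Finset.sum_le_sum
          intro i _
          rw [abs_mul, abs_of_pos hc0]
          gcongr
          calc |∑ j, A j i * x j| ≤ ∑ j, |A j i * x j| := Finset.abs_sum_le_sum_abs _ _
            _ = ∑ j, A j i * |x j| := by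
                exact Finset.sum_congr rfl fun j _ => by
                  rw [abs_mul, abs_of_nonneg (hA_nonneg j i)]
      _ = c * ∑ j, |x j| := by
          rw [← Finset.mul_sum, Finset.sum_comm]
          congr 1
          refine Finset.sum_congr rfl fun j _ => ?_
          rw [← Finset.sum_mul, hA_row j, one_mul]
  have hS0 : 0 ≤ ∑ i, |x i| := Finset.sum_nonneg fun i _ => abs_nonneg _
  have : ∑ i, |x i| = 0 := by nlinarith
  apply hx
  funext i
  have := (Finset.sum_eq_zero_iff_of_nonneg (fun i _ => abs_nonneg (x i))).1 this i (Finset.mem_univ i)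
  simpa using this

/-- The difference of the PageRank vector and the stationary vector satisfies
`π - f = (1-c)(I - cAᵀ)⁻¹(v - f)`. -/
theorem pagerank_sub_degree_eq_resolvent {n : ℕ}
    (A : Matrix (Fin n) (Fin n) ℝ)
    (hA_nonneg : ∀ i j, 0 ≤ A i j) (hA_row : ∀ i, ∑ j, A i j = 1)
    (c : ℝ) (hc0 : 0 < c) (hc1 : c < 1)
    (f : Fin n → ℝ) (hf_nonneg : ∀ i, 0 ≤ f i)
    (hf_fix : Aᵀ *ᵥ f = f) (hf_norm : ∑ i, |f i| = 1)
    (v : Fin n → ℝ) (hv_nonneg : ∀ i, 0 ≤ v i) (hv_sum : ∑ i, v i = 1)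
    (π : Fin n → ℝ) (hπ_nonneg : ∀ i, 0 ≤ π i) (hπ_norm : ∑ i, |π i| = 1)
    (hπ_fix : (c • Aᵀ + (1 - c) • Matrix.vecMulVec v 1) *ᵥ π = π) :
    π - f = (1 - c) • (((1 : Matrix (Fin n) (Fin n) ℝ) - c • Aᵀ)⁻¹ *ᵥ (v - f)) := by
  have hdet := det_ne_of_stoch A hA_nonneg hA_row c hc0 hc1
  set M : Matrix (Fin n) (Fin n) ℝ := 1 - c • Aᵀ with hM
  have hπsum : ∑ i, π i = 1 := by
    rw [← hπ_norm]
    exact Finset.sum_congr rfl fun i _ => (abs_of_nonneg (hπ_nonneg i)).symm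
  have hMπ : M *ᵥ π = (1 - c) • v := by
    have h1 : Matrix.vecMulVec v 1 *ᵥ π = v := by
      funext i
      simp [Matrix.vecMulVec, Matrix.mulVec, dotProduct, ← Finset.mul_sum, hπsum]
    have h2 := hπ_fix
    rw [Matrix.add_mulVec, Matrix.smul_mulVec, Matrix.smul_mulVec, h1] at h2
    rw [hM, Matrix.sub_mulVec, Matrix.one_mulVec, Matrix.smul_mulVec]
    funext i
    have h3 := congrFun h2 i
    simp only [Pi.add_apply, Pi.sub_apply, Pi.smul_apply, smul_eq_mul] at h3 ⊢
    linarith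
  have hMf : M *ᵥ f = (1 - c) • f := by
    rw [hM, Matrix.sub_mulVec, Matrix.one_mulVec, Matrix.smul_mulVec, hf_fix,
      sub_smul, one_smul]
  have key : M *ᵥ (π - f) = (1 - c) • (v - f) := by
    rw [Matrix.mulVec_sub, hMπ, hMf, ← smul_sub]
  calc π - f = M⁻¹ *ᵥ (M *ᵥ (π - f)) := by
        rw [Matrix.mulVec_mulVec, Matrix.nonsing_inv_mul M (isUnit_iff_ne_zero.2 hdet),
          Matrix.one_mulVec]
    _ = (1 - c) • (M⁻¹ *ᵥ (v - f)) := by rw [key, Matrix.mulVec_smul]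
end

section
/- Let A be an n×n row-stochastic matrix, let 0 < c < 1, let f satisfy Aᵀf = f with ‖f‖₁ = 1 and nonnegative coordinates, let v be a vector with nonnegative coordinates and 𝟏ᵀv = 1, and let π be the PageRank vector: π has nonnegative coordinates, ‖π‖₁ = 1 and (cAᵀ + (1-c)v𝟏ᵀ)π = π. Then π = f if and only if v = f. -/
open Finset Matrix

/-- The PageRank vector `π` equals the stationary vector `f` if and only if the
personalization vector `v` equals `f`. -/
theorem pagerank_eq_degree_iff_personalization_eq {n : ℕ}
    (A : Matrix (Fin n) (Fin n) ℝ)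
    (hA_nonneg : ∀ i j, 0 ≤ A i j) (hA_row : ∀ i, ∑ j, A i j = 1)
    (c : ℝ) (hc0 : 0 < c) (hc1 : c < 1)
    (f : Fin n → ℝ) (hf_nonneg : ∀ i, 0 ≤ f i)
    (hf_fix : Aᵀ *ᵥ f = f) (hf_norm : ∑ i, |f i| = 1)
    (v : Fin n → ℝ) (hv_nonneg : ∀ i, 0 ≤ v i) (hv_sum : ∑ i, v i = 1)
    (π : Fin n → ℝ) (hπ_nonneg : ∀ i, 0 ≤ π i) (hπ_norm : ∑ i, |π i| = 1)
    (hπ_fix : (c • Aᵀ + (1 - c) • Matrix.vecMulVec v 1) *ᵥ π = π) :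
    π = f ↔ v = f := by
  have hπ_sum : ∑ i, π i = 1 := by
    rw [← hπ_norm]
    exact Finset.sum_congr rfl fun i _ => (abs_of_nonneg (hπ_nonneg i)).symm
  have hfix : ∀ i, c * (Aᵀ *ᵥ π) i + (1 - c) * v i = π i := by
    intro i
    have h := congrFun hπ_fix i
    simp only [Matrix.mulVec, dotProduct, Matrix.add_apply, Matrix.smul_apply,
      Matrix.vecMulVec_apply, Pi.one_apply, smul_eq_mul, mul_one, add_mul,
      Finset.sum_add_distrib, ← Finset.mul_sum, mul_assoc] at h ⊢
    rw [hπ_sum, mul_one] at h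
    linarith
  constructor
  · intro hπf
    subst hπf
    funext i
    have h := hfix i
    rw [hf_fix] at h
    have h1c : (1 : ℝ) - c ≠ 0 := by linarith
    have : (1 - c) * v i = (1 - c) * π i := by linarith
    exact mul_left_cancel₀ h1c this
  · intro hvf
    have hfix' : ∀ i, c * (Aᵀ *ᵥ π) i + (1 - c) * f i = π i := by
      intro i; rw [← hvf]; exact hfix i
    set g : Fin n → ℝ := π - f with hg
    have hgfix : ∀ i, g i = c * (Aᵀ *ᵥ g) i := by
      intro i
      have h1 := hfix' i
      have h2 : (Aᵀ *ᵥ f) i = f i := congrFun hf_fix i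
      have h3 : (Aᵀ *ᵥ g) i = (Aᵀ *ᵥ π) i - (Aᵀ *ᵥ f) i := by
        rw [hg, Matrix.mulVec_sub]; rfl
      simp only [hg, Pi.sub_apply]
      rw [h3, h2]
      ring_nf
      linarith
    have hbound : ∑ i, |g i| ≤ c * ∑ i, |g i| := by
      calc ∑ i, |g i| = ∑ i, c * |(Aᵀ *ᵥ g) i| := by
              refine Finset.sum_congr rfl fun i _ => ?_
              rw [hgfix i, abs_mul, abs_of_pos hc0]
        _ ≤ ∑ i, c * ∑ j, A j i * |g j| := by
              refine Finset.sum_le_sum fun i _ => ?_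
              refine mul_le_mul_of_nonneg_left ?_ hc0.le
              calc |(Aᵀ *ᵥ g) i| = |∑ j, A j i * g j| := by
                      simp [Matrix.mulVec, dotProduct]
                _ ≤ ∑ j, |A j i * g j| := Finset.abs_sum_le_sum_abs _ _
                _ = ∑ j, A j i * |g j| := by
                      refine Finset.sum_congr rfl fun j _ => ?_
                      rw [abs_mul, abs_of_nonneg (hA_nonneg j i)]
        _ = c * ∑ j, |g j| := by
              rw [← Finset.mul_sum, Finset.sum_comm]
              congr 1
              refine Finset.sum_congr rfl fun j _ => ?_
              rw [← Finset.sum_mul, hA_row j, one_mul]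
    have hzero : ∑ i, |g i| = 0 := by nlinarith [Finset.sum_nonneg (fun i (_ : i ∈ Finset.univ) => abs_nonneg (g i))]
    have := (Finset.sum_eq_zero_iff_of_nonneg (fun i _ => abs_nonneg (g i))).mp hzero
    funext i
    have hi := abs_eq_zero.mp (this i (Finset.mem_univ i))
    have : π i - f i = 0 := hi
    linarith
end

section
/- Let G be a finite connected undirected graph on n vertices with no isolated vertices, let A be its random-walk transition matrix (the (i,j) entry is 1/d(vᵢ) if vᵢ is adjacent to vⱼ and 0 otherwise), let f be the degree-distribution vector with coordinates d(vᵢ)/(2|E|), let 0 < c < 1, and let v = (1/n)𝟏 be the uniform personalization vector. Then the PageRank vector π (the vector with nonnegative coordinates, ‖π‖₁ = 1 and (cAᵀ + (1-c)v𝟏ᵀ)π = π) equals f if and only if G is regular, i.e., all vertices of G have the same degree. -/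
open Finset Matrix

/-- For a finite connected undirected graph with no isolated vertices, the non-personalized
PageRank vector (with uniform personalization vector `v = (1/n)𝟏`) equals the
degree-distribution vector if and only if the graph is regular. -/
theorem pagerank_uniform_eq_degree_iff_regular {n : ℕ}
    (G : SimpleGraph (Fin n)) [DecidableRel G.Adj]
    (hconn : G.Connected) (hdeg : ∀ i, 0 < G.degree i)
    (A : Matrix (Fin n) (Fin n) ℝ)
    (hA : ∀ i j, A i j = if G.Adj i j then 1 / (G.degree i : ℝ) else 0)
    (f : Fin n → ℝ)
    (hf : ∀ i, f i = (G.degree i : ℝ) / (2 * (G.edgeFinset.card : ℝ)))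
    (c : ℝ) (hc0 : 0 < c) (hc1 : c < 1)
    (v : Fin n → ℝ) (hv : ∀ i, v i = 1 / (n : ℝ))
    (π : Fin n → ℝ) (hπ_nonneg : ∀ i, 0 ≤ π i) (hπ_norm : ∑ i, |π i| = 1)
    (hπ_fix : (c • Aᵀ + (1 - c) • Matrix.vecMulVec v 1) *ᵥ π = π) :
    π = f ↔ ∃ d : ℕ, G.IsRegularOfDegree d := by
  classical
  have hπ_sum : ∑ i, π i = 1 := by
    rw [← hπ_norm]
    exact Finset.sum_congr rfl fun i _ => (abs_of_nonneg (hπ_nonneg i)).symm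
  have hn : 0 < n := by
    rcases Nat.eq_zero_or_pos n with h | h
    · subst h; simp at hπ_sum
    · exact h
  set i0 : Fin n := ⟨0, hn⟩
  -- positivity of edge count
  have hsumdeg : ∑ i, (G.degree i) = 2 * G.edgeFinset.card :=
    G.sum_degrees_eq_twice_card_edges
  have hE : (0:ℝ) < 2 * (G.edgeFinset.card : ℝ) := by
    have h1 : 0 < ∑ i, G.degree i :=
      Finset.sum_pos (fun i _ => hdeg i) ⟨i0, Finset.mem_univ i0⟩
    rw [hsumdeg] at h1
    exact_mod_cast h1
  have hfil : ∀ i, Finset.univ.filter (G.Adj i) = G.neighborFinset i := by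
    intro i; ext j; simp [SimpleGraph.mem_neighborFinset]
  -- row sums of A equal 1
  have hrow : ∀ i, ∑ j, A i j = 1 := by
    intro i
    rw [Finset.sum_congr rfl (fun j _ => hA i j), ← Finset.sum_filter, hfil i,
      Finset.sum_const, G.card_neighborFinset_eq_degree i]
    have hd : (G.degree i : ℝ) ≠ 0 := Nat.cast_ne_zero.mpr (hdeg i).ne'
    rw [nsmul_eq_mul]
    field_simp
  -- f is a fixed point of Aᵀ
  have hAf : ∀ i, ∑ j, A j i * f j = f i := by
    intro i
    have hterm : ∀ j, A j i * f j =
        if G.Adj i j then (1 / (2 * (G.edgeFinset.card : ℝ))) else 0 := by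
      intro j
      rw [hA, hf]
      by_cases h : G.Adj j i
      · rw [if_pos h, if_pos h.symm]
        have hd : (G.degree j : ℝ) ≠ 0 := Nat.cast_ne_zero.mpr (hdeg j).ne'
        field_simp
      · rw [if_neg h, if_neg (fun h' => h h'.symm), zero_mul]
    rw [Finset.sum_congr rfl fun j _ => hterm j, ← Finset.sum_filter, hfil i,
      Finset.sum_const, G.card_neighborFinset_eq_degree i, nsmul_eq_mul, hf]
    ring
  -- the fixed point equation, componentwise
  have hfix : ∀ i, c * (∑ j, A j i * π j) + (1 - c) * v i = π i := by
    intro i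
    have h := congrFun hπ_fix i
    simp only [Matrix.add_mulVec, Matrix.smul_mulVec, Pi.add_apply,
      Pi.smul_apply, smul_eq_mul] at h
    have h1 : (Aᵀ *ᵥ π) i = ∑ j, A j i * π j := by
      simp [Matrix.mulVec, dotProduct, Matrix.transpose_apply]
    have h2 : (Matrix.vecMulVec v 1 *ᵥ π) i = v i := by
      simp [Matrix.mulVec, dotProduct, Matrix.vecMulVec_apply,
        ← Finset.mul_sum, hπ_sum]
    rw [h1, h2] at h
    exact h
  constructor
  · -- π = f ⇒ regular
    intro hpf
    refine ⟨G.degree i0, fun i => ?_⟩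
    have key : ∀ i, f i = v i := by
      intro i
      have h := hfix i
      rw [hpf, hAf i] at h
      have : (1 - c) * f i = (1 - c) * v i := by linarith
      have hc : (1 - c) ≠ 0 := by linarith
      exact mul_left_cancel₀ hc this
    have h1 : f i = f i0 := by rw [key i, key i0, hv, hv]
    rw [hf, hf] at h1
    have h2 : (G.degree i : ℝ) = (G.degree i0 : ℝ) := by
      rw [div_eq_div_iff hE.ne' hE.ne'] at h1
      exact mul_right_cancel₀ hE.ne' h1
    exact_mod_cast h2
  · -- regular ⇒ π = f
    rintro ⟨d, hreg⟩
    have hd0 : 0 < d := by rw [← hreg i0]; exact hdeg i0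
    have h2E : 2 * (G.edgeFinset.card : ℝ) = (n : ℝ) * d := by
      have : ∑ i, (G.degree i) = n * d := by
        rw [Finset.sum_congr rfl fun i _ => hreg i, Finset.sum_const,
          Finset.card_univ, Fintype.card_fin, smul_eq_mul]
      rw [hsumdeg] at this
      exact_mod_cast this
    have hfv : ∀ i, f i = v i := by
      intro i
      rw [hf, hv, hreg i, h2E]
      have hn' : (n : ℝ) ≠ 0 := Nat.cast_ne_zero.mpr hn.ne'
      have hd' : (d : ℝ) ≠ 0 := Nat.cast_ne_zero.mpr hd0.ne'
      field_simp
    -- f satisfies the fixed point equation, so w = π - f satisfies w = c Aᵀ w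
    set w : Fin n → ℝ := fun i => π i - f i with hw_def
    have hwfix : ∀ i, w i = c * ∑ j, A j i * w j := by
      intro i
      have hffix : c * (∑ j, A j i * f j) + (1 - c) * v i = f i := by
        rw [hAf i, hfv i]; ring
      have h := hfix i
      have : π i - f i = c * ((∑ j, A j i * π j) - ∑ j, A j i * f j) := by
        linarith
      rw [hw_def]
      simp only
      rw [this, ← Finset.sum_sub_distrib]
      congr 1
      exact Finset.sum_congr rfl fun j _ => by ring
    have hA_nonneg : ∀ i j, 0 ≤ A i j := by
      intro i j
      rw [hA]
      split
      · positivity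
      · exact le_rfl
    set S : ℝ := ∑ i, |w i| with hS_def
    have hS_nonneg : 0 ≤ S := Finset.sum_nonneg fun i _ => abs_nonneg _
    have hS_le : S ≤ c * S := by
      have step1 : S = c * ∑ i, |∑ j, A j i * w j| := by
        rw [hS_def, Finset.mul_sum]
        refine Finset.sum_congr rfl fun i _ => ?_
        rw [hwfix i, abs_mul, abs_of_pos hc0]
      have step2 : ∑ i, |∑ j, A j i * w j| ≤ ∑ i, ∑ j, A j i * |w j| := by
        refine Finset.sum_le_sum fun i _ => ?_
        refine (Finset.abs_sum_le_sum_abs _ _).trans ?_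
        refine Finset.sum_le_sum fun j _ => ?_
        rw [abs_mul, abs_of_nonneg (hA_nonneg j i)]
      have step3 : ∑ i, ∑ j, A j i * |w j| = S := by
        rw [Finset.sum_comm, hS_def]
        refine Finset.sum_congr rfl fun j _ => ?_
        rw [← Finset.sum_mul, hrow j, one_mul]
      calc S = c * ∑ i, |∑ j, A j i * w j| := step1
        _ ≤ c * ∑ i, ∑ j, A j i * |w j| :=
            mul_le_mul_of_nonneg_left step2 hc0.le
        _ = c * S := by rw [step3]
    have hS0 : S = 0 := by nlinarith
    have hw0 : ∀ i ∈ Finset.univ, |w i| = 0 :=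
      (Finset.sum_eq_zero_iff_of_nonneg fun i _ => abs_nonneg _).mp hS0
    funext i
    have := hw0 i (Finset.mem_univ i)
    have : w i = 0 := abs_eq_zero.mp this
    rw [hw_def] at this
    simp only at this
    linarith
end

section
/- Let A be an n×n row-stochastic matrix, let 0 < c < 1, and let x be any vector in ℝⁿ. Then ‖(1-c)(I - cAᵀ)⁻¹x‖₁ ≤ ‖x‖₁. -/
open Finset Matrix

lemma l1_mulVec_transpose_le {n : ℕ} (A : Matrix (Fin n) (Fin n) ℝ)
    (hA_nonneg : ∀ i j, 0 ≤ A i j) (hA_row : ∀ i, ∑ j, A i j = 1)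
    (y : Fin n → ℝ) : ∑ i, |(Aᵀ *ᵥ y) i| ≤ ∑ i, |y i| := by
  calc ∑ i, |(Aᵀ *ᵥ y) i| ≤ ∑ i, ∑ j, A j i * |y j| := by
        apply Finset.sum_le_sum
        intro i _
        calc |(Aᵀ *ᵥ y) i| = |∑ j, A j i * y j| := by
              simp [Matrix.mulVec, dotProduct, Matrix.transpose_apply]
          _ ≤ ∑ j, |A j i * y j| := Finset.abs_sum_le_sum_abs _ _
          _ = ∑ j, A j i * |y j| := by
              refine Finset.sum_congr rfl fun j _ => ?_
              rw [abs_mul, abs_of_nonneg (hA_nonneg j i)]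
    _ = ∑ j, (∑ i, A j i) * |y j| := by
        rw [Finset.sum_comm]
        simp [Finset.sum_mul]
    _ = ∑ j, |y j| := by simp [hA_row]

lemma key_estimate {n : ℕ} (A : Matrix (Fin n) (Fin n) ℝ)
    (hA_nonneg : ∀ i j, 0 ≤ A i j) (hA_row : ∀ i, ∑ j, A i j = 1)
    (c : ℝ) (hc0 : 0 < c) (y : Fin n → ℝ) :
    (1 - c) * ∑ i, |y i| ≤
      ∑ i, |(((1 : Matrix (Fin n) (Fin n) ℝ) - c • Aᵀ) *ᵥ y) i| := by
  have h1 : ∀ i, (((1 : Matrix (Fin n) (Fin n) ℝ) - c • Aᵀ) *ᵥ y) i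
      = y i - c * (Aᵀ *ᵥ y) i := by
    intro i
    simp [Matrix.sub_mulVec, Matrix.smul_mulVec, Matrix.one_mulVec]
  have h2 : ∀ i, |y i| - c * |(Aᵀ *ᵥ y) i| ≤
      |(((1 : Matrix (Fin n) (Fin n) ℝ) - c • Aᵀ) *ᵥ y) i| := by
    intro i
    rw [h1 i]
    have := abs_sub_abs_le_abs_sub (y i) (c * (Aᵀ *ᵥ y) i)
    calc |y i| - c * |(Aᵀ *ᵥ y) i| = |y i| - |c * (Aᵀ *ᵥ y) i| := by
          rw [abs_mul, abs_of_pos hc0]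
      _ ≤ |y i - c * (Aᵀ *ᵥ y) i| := this
  calc (1 - c) * ∑ i, |y i| = ∑ i, |y i| - c * ∑ i, |y i| := by ring
    _ ≤ ∑ i, |y i| - c * ∑ i, |(Aᵀ *ᵥ y) i| := by
        have := l1_mulVec_transpose_le A hA_nonneg hA_row y
        nlinarith
    _ = ∑ i, (|y i| - c * |(Aᵀ *ᵥ y) i|) := by
        rw [Finset.sum_sub_distrib, Finset.mul_sum]
    _ ≤ _ := Finset.sum_le_sum fun i _ => h2 i

/-- For a row-stochastic matrix `A`, `0 < c < 1` and any vector `x`,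
`‖(1-c)(I - cAᵀ)⁻¹x‖₁ ≤ ‖x‖₁`. -/
theorem l1_norm_resolvent_mulVec_le {n : ℕ}
    (A : Matrix (Fin n) (Fin n) ℝ)
    (hA_nonneg : ∀ i j, 0 ≤ A i j) (hA_row : ∀ i, ∑ j, A i j = 1)
    (c : ℝ) (hc0 : 0 < c) (hc1 : c < 1)
    (x : Fin n → ℝ) :
    ∑ i, |((1 - c) • ((((1 : Matrix (Fin n) (Fin n) ℝ) - c • Aᵀ)⁻¹) *ᵥ x)) i| ≤
      ∑ i, |x i| := by
  set M : Matrix (Fin n) (Fin n) ℝ := (1 : Matrix (Fin n) (Fin n) ℝ) - c • Aᵀ with hM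
  have hdet : M.det ≠ 0 := by
    intro hdet
    obtain ⟨v, hv, hMv⟩ := (Matrix.exists_mulVec_eq_zero_iff).2 hdet
    have hkey := key_estimate A hA_nonneg hA_row c hc0 v
    rw [← hM, hMv] at hkey
    simp only [Pi.zero_apply, abs_zero, Finset.sum_const_zero] at hkey
    have hpos : 0 < ∑ i, |v i| := by
      obtain ⟨i, hi⟩ := Function.ne_iff.1 hv
      exact Finset.sum_pos' (fun j _ => abs_nonneg _)
        ⟨i, Finset.mem_univ i, abs_pos.2 hi⟩
    nlinarith
  set y : Fin n → ℝ := M⁻¹ *ᵥ x with hy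
  have hMy : M *ᵥ y = x := by
    rw [hy, Matrix.mulVec_mulVec, Matrix.mul_nonsing_inv M (isUnit_iff_ne_zero.2 hdet),
      Matrix.one_mulVec]
  have hkey := key_estimate A hA_nonneg hA_row c hc0 y
  rw [← hM, hMy] at hkey
  calc ∑ i, |((1 - c) • y) i| = (1 - c) * ∑ i, |y i| := by
        rw [Finset.mul_sum]
        refine Finset.sum_congr rfl fun i _ => ?_
        rw [Pi.smul_apply, smul_eq_mul, abs_mul, abs_of_pos (by linarith)]
    _ ≤ ∑ i, |x i| := hkey
end
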